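/- arXiv:2205.05870 — 6 statements merged into one kernel-verified Lean document; each statement's English description precedes it below -/
import Mathlib

section
/- Every Lagrangian subspace R ⊆ F^{2n} admits a parity-check matrix in the standard form H = [[Y, 0, I_{n_p}, Aᵀ],[-A, I_{n_q}, 0, 0]]·σ_S, where n_p + n_q = n, A is an n_q × n_p matrix, Y is a symmetric n_p × n_p matrix (Y = Yᵀ), and σ_S = diag(σ, σ) is a symplectic permutation matrix for some permutation σ of n letters. -/
open Matrix

section Aux

variable {F : Type*} [Field F] {n np nq : ℕ}

theorem key_ker (h : np + nq = n)
    (R : Submodule F (Fin n ⊕ Fin n → F))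
    (β : (Fin np ⊕ Fin nq) ≃ Fin n)
    (Y : Matrix (Fin np) (Fin np) F) (A : Matrix (Fin nq) (Fin np) F)
    (hmem : ∀ v : Fin n ⊕ Fin n → F, v ∈ R ↔
      ((∀ s, v (Sum.inl (β (Sum.inr s))) = A.mulVec (fun r => v (Sum.inl (β (Sum.inl r)))) s) ∧
       (∀ t, v (Sum.inr (β (Sum.inl t))) =
          - Y.mulVec (fun r => v (Sum.inl (β (Sum.inl r)))) t
          - A.transpose.mulVec (fun s => v (Sum.inr (β (Sum.inr s)))) t))) :
    LinearMap.ker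
      ((Matrix.fromBlocks (Matrix.fromCols Y 0) (Matrix.fromCols 1 A.transpose)
            (Matrix.fromCols (-A) 1) 0 *
          (Equiv.sumCongr (β.trans (finSumFinEquiv.trans (finCongr h)).symm)
            (β.trans (finSumFinEquiv.trans (finCongr h)).symm)).toPEquiv.toMatrix :
            Matrix _ _ F).submatrix id
        (Sum.map (finSumFinEquiv.trans (finCongr h)).symm
          (finSumFinEquiv.trans (finCongr h)).symm)).mulVecLin = R := by
  classical
  set e : (Fin np ⊕ Fin nq) ≃ Fin n := finSumFinEquiv.trans (finCongr h) with he
  set σ : Equiv.Perm (Fin np ⊕ Fin nq) := β.trans e.symm with hσ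
  set H0 : Matrix (Fin np ⊕ Fin nq) ((Fin np ⊕ Fin nq) ⊕ (Fin np ⊕ Fin nq)) F :=
    Matrix.fromBlocks (Matrix.fromCols Y 0) (Matrix.fromCols 1 A.transpose)
      (Matrix.fromCols (-A) 1) 0 with hH0
  have hmul : (H0 * (Equiv.sumCongr σ σ).toPEquiv.toMatrix : Matrix _ _ F)
      = H0.submatrix id (Equiv.sumCongr σ σ).symm :=
    PEquiv.mul_toMatrix_toPEquiv _ _
  have hcol : ∀ j : Fin n, σ.symm (e.symm j) = β.symm j := fun j => by
    simp [hσ]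
  have hsub : (H0 * (Equiv.sumCongr σ σ).toPEquiv.toMatrix : Matrix _ _ F).submatrix id
      (Sum.map e.symm e.symm) = H0.submatrix id (Sum.map β.symm β.symm) := by
    rw [hmul, Matrix.submatrix_submatrix]
    exact Matrix.ext fun i j => by cases j <;> simp [hcol]
  rw [hsub]
  ext v
  rw [LinearMap.mem_ker, hmem, Matrix.mulVecLin_apply]
  set x : Fin np → F := fun r => v (Sum.inl (β (Sum.inl r))) with hx
  set y : Fin nq → F := fun s => v (Sum.inr (β (Sum.inr s))) with hy
  have hrow : ∀ i, (H0.submatrix id (Sum.map β.symm β.symm)).mulVec v i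
      = Sum.elim
          (fun t => Y.mulVec x t + v (Sum.inr (β (Sum.inl t))) + A.transpose.mulVec y t)
          (fun s => -(A.mulVec x s) + v (Sum.inl (β (Sum.inr s)))) i := by
    intro i
    have hsum : (H0.submatrix id (Sum.map β.symm β.symm)).mulVec v i
        = ∑ k : Fin np ⊕ Fin nq, H0 i (Sum.inl k) * v (Sum.inl (β k))
          + ∑ k : Fin np ⊕ Fin nq, H0 i (Sum.inr k) * v (Sum.inr (β k)) := by
      rw [Matrix.mulVec, dotProduct, Fintype.sum_sum_type]
      congr 1
      · exact (Fintype.sum_equiv β (fun k => H0 i (Sum.inl k) * v (Sum.inl (β k)))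
          (fun j => H0.submatrix id (Sum.map β.symm β.symm) i (Sum.inl j) * v (Sum.inl j))
          (fun k => by simp)).symm
      · exact (Fintype.sum_equiv β (fun k => H0 i (Sum.inr k) * v (Sum.inr (β k)))
          (fun j => H0.submatrix id (Sum.map β.symm β.symm) i (Sum.inr j) * v (Sum.inr j))
          (fun k => by simp)).symm
    rw [hsum]
    cases i with
    | inl t =>
      simp only [Fintype.sum_sum_type, hH0, Matrix.fromBlocks_apply₁₁,
        Matrix.fromBlocks_apply₁₂, Matrix.fromCols_apply_inl, Matrix.fromCols_apply_inr,
        Sum.elim_inl]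
      rw [Matrix.mulVec, dotProduct, Matrix.mulVec, dotProduct]
      simp [Matrix.one_apply, Finset.sum_ite_eq, hx, hy, add_assoc]
    | inr s =>
      simp only [Fintype.sum_sum_type, hH0, Matrix.fromBlocks_apply₂₁,
        Matrix.fromBlocks_apply₂₂, Matrix.fromCols_apply_inl, Matrix.fromCols_apply_inr,
        Sum.elim_inr]
      rw [Matrix.mulVec, dotProduct]
      simp [Matrix.one_apply, Finset.sum_ite_eq, hx, neg_mul]
  rw [funext_iff]
  simp only [Pi.zero_apply]
  constructor
  · intro hv
    refine ⟨fun s => ?_, fun t => ?_⟩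
    · have := hv (Sum.inr s)
      rw [hrow (Sum.inr s)] at this
      simp only [Sum.elim_inr] at this
      linear_combination this
    · have := hv (Sum.inl t)
      rw [hrow (Sum.inl t)] at this
      simp only [Sum.elim_inl] at this
      linear_combination this
  · rintro ⟨e1, e2⟩ i
    rw [hrow i]
    cases i with
    | inl t => simp only [Sum.elim_inl]; linear_combination e2 t
    | inr s => simp only [Sum.elim_inr]; linear_combination e1 s

end Aux

set_option maxHeartbeats 1000000 in
set_option synthInstance.maxHeartbeats 100000 in

/-- Every Lagrangian subspace `R ⊆ F^{2n}` admits a parity-check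
matrix in the standard form `[[Y,0,I,Aᵀ],[-A,I,0,0]]·σ_S`, where `n_p + n_q = n`,
`Y` is symmetric, `A` is `n_q × n_p`, and `σ_S = diag(σ,σ)` is a symplectic
permutation.  (Columns are identified with `Fin n ⊕ Fin n` via
`e : Fin n_p ⊕ Fin n_q ≃ Fin n`.) -/
theorem stmt_6 (F : Type*) [Field F] (n : ℕ)
    (R : Submodule F (Fin n ⊕ Fin n → F))
    (hL : (R : Set (Fin n ⊕ Fin n → F)) = {v | ∀ u ∈ R,
        v ⬝ᵥ (Matrix.fromBlocks (0 : Matrix (Fin n) (Fin n) F) 1 (-1) 0).mulVec u = 0}) :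
    ∃ (np nq : ℕ) (h : np + nq = n)
      (Y : Matrix (Fin np) (Fin np) F) (A : Matrix (Fin nq) (Fin np) F)
      (σ : Equiv.Perm (Fin np ⊕ Fin nq)),
      Y = Y.transpose ∧
      (let σS : Matrix ((Fin np ⊕ Fin nq) ⊕ (Fin np ⊕ Fin nq))
            ((Fin np ⊕ Fin nq) ⊕ (Fin np ⊕ Fin nq)) F :=
          (Equiv.sumCongr σ σ).toPEquiv.toMatrix;
        let H0 : Matrix (Fin np ⊕ Fin nq) ((Fin np ⊕ Fin nq) ⊕ (Fin np ⊕ Fin nq)) F :=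
          Matrix.fromBlocks (Matrix.fromCols Y 0) (Matrix.fromCols 1 A.transpose)
            (Matrix.fromCols (-A) 1) 0;
        let e : (Fin np ⊕ Fin nq) ≃ Fin n := finSumFinEquiv.trans (finCongr h);
        LinearMap.ker ((H0 * σS).submatrix id (Sum.map e.symm e.symm)).mulVecLin = R) := by
  classical
  set J : Matrix (Fin n ⊕ Fin n) (Fin n ⊕ Fin n) F :=
    Matrix.fromBlocks 0 1 (-1) 0 with hJdef
  have hmemR : ∀ v, v ∈ R ↔ ∀ u ∈ R, v ⬝ᵥ J.mulVec u = 0 := fun v => Set.ext_iff.mp hL v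
  have hJv : ∀ u : Fin n ⊕ Fin n → F, J.mulVec u
      = Sum.elim (fun j => u (Sum.inr j)) (fun j => -u (Sum.inl j)) := by
    intro u
    funext k
    cases k with
    | inl j =>
      rw [Matrix.mulVec, dotProduct, Fintype.sum_sum_type]
      simp [hJdef, Matrix.one_apply, Finset.sum_ite_eq]
    | inr j =>
      rw [Matrix.mulVec, dotProduct, Fintype.sum_sum_type]
      simp [hJdef, Matrix.one_apply, Finset.sum_ite_eq]
  have hJ : ∀ v u : Fin n ⊕ Fin n → F, v ⬝ᵥ J.mulVec u
      = ∑ j, v (Sum.inl j) * u (Sum.inr j) - ∑ j, v (Sum.inr j) * u (Sum.inl j) := by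
    intro v u
    rw [dotProduct, Fintype.sum_sum_type]
    simp [hJv, mul_neg, sub_eq_add_neg, Finset.sum_neg_distrib]
  -- the coordinate functionals (q-part) on R
  set φ : Fin n → Module.Dual F ↥R :=
    fun i => (LinearMap.proj (Sum.inl i)).comp R.subtype with hφdef
  have hφ_apply : ∀ i (a : ↥R), φ i a = (a : Fin n ⊕ Fin n → F) (Sum.inl i) := fun _ _ => rfl
  obtain ⟨I, (hind : LinearIndependent F (fun x : I => φ x)), hspanI⟩ :=
    exists_maximal_linearIndepOn F φ
  haveI : Fintype ↥I := Fintype.ofFinite _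
  haveI : Fintype ↥(Iᶜ : Set (Fin n)) := Fintype.ofFinite _
  obtain ⟨np, hnp⟩ : ∃ m, Fintype.card ↥I = m := ⟨_, rfl⟩
  obtain ⟨nq, hnq⟩ : ∃ m, Fintype.card ↥(Iᶜ : Set (Fin n)) = m := ⟨_, rfl⟩
  have h : np + nq = n := by
    have := Fintype.card_congr (Equiv.Set.sumCompl I)
    rw [Fintype.card_sum, hnp, hnq, Fintype.card_fin] at this
    exact this
  set βp : Fin np ≃ ↥I := (finCongr hnp.symm).trans (Fintype.equivFin ↥I).symm with hβp
  set βq : Fin nq ≃ ↥(Iᶜ : Set (Fin n)) :=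
    (finCongr hnq.symm).trans (Fintype.equivFin _).symm with hβq
  set β : (Fin np ⊕ Fin nq) ≃ Fin n :=
    (Equiv.sumCongr βp βq).trans (Equiv.Set.sumCompl I) with hβ
  have hβl : ∀ r, β (Sum.inl r) = ↑(βp r) := fun r => by
    simp [hβ]
  have hβr : ∀ s, β (Sum.inr s) = ↑(βq s) := fun s => by
    simp [hβ]
  have hβlI : ∀ r, β (Sum.inl r) ∈ I := fun r => by rw [hβl]; exact (βp r).2
  have hβrI : ∀ s, β (Sum.inr s) ∉ I := fun s => by rw [hβr]; exact (βq s).2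
  have hcover : ∀ i ∈ I, ∃ r, β (Sum.inl r) = i := by
    intro i hi
    obtain ⟨k, hk⟩ := β.surjective i
    cases k with
    | inl r => exact ⟨r, hk⟩
    | inr s => exact absurd (hk ▸ hi) (hβrI s)
  -- span property
  have hspan' : ∀ j, φ j ∈ Submodule.span F (Set.range fun r : Fin np => φ (β (Sum.inl r))) := by
    have hrange : (Set.range fun r : Fin np => φ (β (Sum.inl r))) = φ '' I := by
      ext ψ'
      constructor
      · rintro ⟨r, rfl⟩; exact ⟨β (Sum.inl r), hβlI r, rfl⟩
      · rintro ⟨i, hi, rfl⟩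
        obtain ⟨r, hr⟩ := hcover i hi
        exact ⟨r, show φ (β (Sum.inl r)) = φ i by rw [hr]⟩
    rw [hrange]
    intro j
    by_cases hj : j ∈ I
    · exact Submodule.subset_span ⟨j, hj, rfl⟩
    · obtain ⟨a, ha, hmem⟩ := hspanI j hj
      have := Submodule.smul_mem _ a⁻¹ hmem
      rwa [smul_smul, inv_mul_cancel₀ ha, one_smul] at this
  have hvanish : ∀ a : ↥R, (∀ r, (a : Fin n ⊕ Fin n → F) (Sum.inl (β (Sum.inl r))) = 0) →
      ∀ j, (a : Fin n ⊕ Fin n → F) (Sum.inl j) = 0 := by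
    intro a ha j
    have hker : Submodule.span F (Set.range fun r : Fin np => φ (β (Sum.inl r)))
        ≤ LinearMap.ker (Module.Dual.eval F ↥R a) := by
      rw [Submodule.span_le]
      rintro _ ⟨r, rfl⟩
      rw [SetLike.mem_coe, LinearMap.mem_ker]
      simpa [Module.Dual.eval, hφ_apply] using ha r
    have := hker (hspan' j)
    rw [LinearMap.mem_ker] at this
    simpa [Module.Dual.eval, hφ_apply] using this
  -- linear independence of the chosen functionals
  have hindψ : LinearIndependent F (fun r : Fin np => φ (β (Sum.inl r))) := by
    have h1 := hind.comp βp βp.injective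
    have : (fun r : Fin np => φ (β (Sum.inl r))) = (fun x : ↥I => φ ↑x) ∘ βp := by
      funext r; simp [hβl r]
    rw [this]
    exact h1
  -- the projection map
  let π : ↥R →ₗ[F] (Fin np → F) × (Fin nq → F) :=
    { toFun := fun a => (fun r => (a : Fin n ⊕ Fin n → F) (Sum.inl (β (Sum.inl r))),
        fun s => (a : Fin n ⊕ Fin n → F) (Sum.inr (β (Sum.inr s))))
      map_add' := fun a b => rfl
      map_smul' := fun c a => rfl }
  -- injectivity of π
  have hinj : Function.Injective π := by
    rw [← LinearMap.ker_eq_bot, eq_bot_iff]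
    rintro a ha
    rw [LinearMap.mem_ker] at ha
    have hq0 : ∀ r, (a : Fin n ⊕ Fin n → F) (Sum.inl (β (Sum.inl r))) = 0 := by
      intro r; exact congrFun (congrArg Prod.fst ha) r
    have hp0 : ∀ s, (a : Fin n ⊕ Fin n → F) (Sum.inr (β (Sum.inr s))) = 0 := by
      intro s; exact congrFun (congrArg Prod.snd ha) s
    have hqall : ∀ j, (a : Fin n ⊕ Fin n → F) (Sum.inl j) = 0 := hvanish a hq0
    -- now the momentum part on I
    have hcomb : (∑ r, (a : Fin n ⊕ Fin n → F) (Sum.inr (β (Sum.inl r))) •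
        φ (β (Sum.inl r))) = 0 := by
      apply LinearMap.ext
      intro b
      have h0 := (hmemR (a : Fin n ⊕ Fin n → F)).mp a.2 (b : Fin n ⊕ Fin n → F) b.2
      rw [hJ] at h0
      have h1 : ∑ j, (a : Fin n ⊕ Fin n → F) (Sum.inl j) * (b : Fin n ⊕ Fin n → F) (Sum.inr j)
          = 0 := by
        apply Finset.sum_eq_zero; intro j _; rw [hqall j, zero_mul]
      have h2 : ∑ j, (a : Fin n ⊕ Fin n → F) (Sum.inr j) * (b : Fin n ⊕ Fin n → F) (Sum.inl j)
          = 0 := by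
        rw [h1] at h0
        linear_combination -h0
      have h3 : ∑ k : Fin np ⊕ Fin nq, (a : Fin n ⊕ Fin n → F) (Sum.inr (β k)) *
          (b : Fin n ⊕ Fin n → F) (Sum.inl (β k)) = 0 := by
        rw [Fintype.sum_equiv β _ (fun j => (a : Fin n ⊕ Fin n → F) (Sum.inr j) *
          (b : Fin n ⊕ Fin n → F) (Sum.inl j)) (fun k => rfl)]
        exact h2
      rw [Fintype.sum_sum_type] at h3
      have h4 : ∑ s : Fin nq, (a : Fin n ⊕ Fin n → F) (Sum.inr (β (Sum.inr s))) *
          (b : Fin n ⊕ Fin n → F) (Sum.inl (β (Sum.inr s))) = 0 := by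
        apply Finset.sum_eq_zero; intro s _; rw [hp0 s, zero_mul]
      rw [h4, add_zero] at h3
      simpa [hφ_apply] using h3
    have hc0 : ∀ r, (a : Fin n ⊕ Fin n → F) (Sum.inr (β (Sum.inl r))) = 0 := by
      intro r
      exact Fintype.linearIndependent_iff.mp hindψ _ hcomb r
    have hpall : ∀ j, (a : Fin n ⊕ Fin n → F) (Sum.inr j) = 0 := by
      intro j
      obtain ⟨k, hk⟩ := β.surjective j
      cases k with
      | inl r => rw [← hk]; exact hc0 r
      | inr s => rw [← hk]; exact hp0 s
    have : (a : Fin n ⊕ Fin n → F) = 0 := by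
      funext k
      cases k with
      | inl j => exact hqall j
      | inr j => exact hpall j
    simpa [Submodule.mem_bot] using Subtype.ext this
  -- lower bound on the dimension of R
  let L : (Fin n ⊕ Fin n → F) →ₗ[F] Module.Dual F ↥R :=
    { toFun := fun v =>
        { toFun := fun a => v ⬝ᵥ J.mulVec (a : Fin n ⊕ Fin n → F)
          map_add' := fun a b => by simp [Matrix.mulVec_add, dotProduct_add]
          map_smul' := fun c a => by simp [Matrix.mulVec_smul, dotProduct_smul] }
      map_add' := fun v w => by ext a; simp [add_dotProduct]
      map_smul' := fun c v => by ext a; simp [smul_dotProduct] }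
  have hkerL : LinearMap.ker L = R := by
    ext v
    rw [LinearMap.mem_ker, hmemR v]
    constructor
    · intro h0 w hw
      have := LinearMap.congr_fun h0 (⟨w, hw⟩ : ↥R)
      simpa [L] using this
    · intro h0
      apply LinearMap.ext
      intro a
      exact h0 (a : Fin n ⊕ Fin n → F) a.2
  have hfin_lower : n ≤ Module.finrank F ↥R := by
    have h1 := LinearMap.finrank_range_add_finrank_ker L
    have h2 : Module.finrank F (Fin n ⊕ Fin n → F) = n + n := by
      simp [Module.finrank_pi]
    have h3 : Module.finrank F ↥(LinearMap.ker L) = Module.finrank F ↥R := by rw [hkerL]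
    have h4 : Module.finrank F ↥(LinearMap.range L) ≤ Module.finrank F ↥R := by
      refine le_trans (Submodule.finrank_le _) ?_
      exact le_of_eq Subspace.dual_finrank_eq
    omega
  have hfr_prod : Module.finrank F ((Fin np → F) × (Fin nq → F)) = n := by
    rw [Module.finrank_prod, Module.finrank_pi, Module.finrank_pi]
    simpa using h
  have hfr : Module.finrank F ↥R = n := by
    have := LinearMap.finrank_le_finrank_of_injective hinj
    rw [hfr_prod] at this
    omega
  have hsurj : Function.Surjective π :=
    (LinearMap.injective_iff_surjective_of_finrank_eq_finrank
      (by rw [hfr, hfr_prod])).mp hinj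
  let g : ↥R ≃ₗ[F] (Fin np → F) × (Fin nq → F) := LinearEquiv.ofBijective π ⟨hinj, hsurj⟩
  let u : Fin np → ↥R := fun r => g.symm (Pi.single r 1, 0)
  let w : Fin nq → ↥R := fun s => g.symm ((0 : Fin np → F), Pi.single s 1)
  have hgu : ∀ r, π (u r) = (Pi.single r 1, (0 : Fin nq → F)) := fun r => g.apply_symm_apply _
  have hgw : ∀ s, π (w s) = ((0 : Fin np → F), Pi.single s 1) := fun s => g.apply_symm_apply _
  have hu_ql : ∀ r r', ((u r : ↥R) : Fin n ⊕ Fin n → F) (Sum.inl (β (Sum.inl r')))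
      = (Pi.single r (1:F) : Fin np → F) r' :=
    fun r r' => by exact congrFun (congrArg Prod.fst (hgu r)) r'
  have hu_pr : ∀ r s, ((u r : ↥R) : Fin n ⊕ Fin n → F) (Sum.inr (β (Sum.inr s))) = 0 :=
    fun r s => by exact congrFun (congrArg Prod.snd (hgu r)) s
  have hw_ql : ∀ s r, ((w s : ↥R) : Fin n ⊕ Fin n → F) (Sum.inl (β (Sum.inl r))) = 0 :=
    fun s r => by exact congrFun (congrArg Prod.fst (hgw s)) r
  have hw_pr : ∀ s s', ((w s : ↥R) : Fin n ⊕ Fin n → F) (Sum.inr (β (Sum.inr s')))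
      = (Pi.single s (1:F) : Fin nq → F) s' :=
    fun s s' => by exact congrFun (congrArg Prod.snd (hgw s)) s'
  have hwq : ∀ s j, ((w s : ↥R) : Fin n ⊕ Fin n → F) (Sum.inl j) = 0 :=
    fun s => hvanish (w s) (hw_ql s)
  set A : Matrix (Fin nq) (Fin np) F :=
    Matrix.of fun s r => ((u r : ↥R) : Fin n ⊕ Fin n → F) (Sum.inl (β (Sum.inr s))) with hA
  set Y : Matrix (Fin np) (Fin np) F :=
    Matrix.of fun t r => -((u r : ↥R) : Fin n ⊕ Fin n → F) (Sum.inr (β (Sum.inl t))) with hY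
  have hu_qr : ∀ r s, ((u r : ↥R) : Fin n ⊕ Fin n → F) (Sum.inl (β (Sum.inr s))) = A s r :=
    fun r s => rfl
  have hu_pl : ∀ r t, ((u r : ↥R) : Fin n ⊕ Fin n → F) (Sum.inr (β (Sum.inl t))) = -(Y t r) :=
    fun r t => by simp [hY]
  -- the symplectic pairing of two elements of R vanishes
  have hpair : ∀ a b : ↥R,
      ∑ k : Fin np ⊕ Fin nq, (a : Fin n ⊕ Fin n → F) (Sum.inl (β k)) *
        (b : Fin n ⊕ Fin n → F) (Sum.inr (β k))
      = ∑ k : Fin np ⊕ Fin nq, (a : Fin n ⊕ Fin n → F) (Sum.inr (β k)) *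
        (b : Fin n ⊕ Fin n → F) (Sum.inl (β k)) := by
    intro a b
    have h0 := (hmemR (a : Fin n ⊕ Fin n → F)).mp a.2 (b : Fin n ⊕ Fin n → F) b.2
    rw [hJ] at h0
    have e1 := Fintype.sum_equiv β
      (fun k => (a : Fin n ⊕ Fin n → F) (Sum.inl (β k)) * (b : Fin n ⊕ Fin n → F) (Sum.inr (β k)))
      (fun j => (a : Fin n ⊕ Fin n → F) (Sum.inl j) * (b : Fin n ⊕ Fin n → F) (Sum.inr j))
      (fun k => rfl)
    have e2 := Fintype.sum_equiv β
      (fun k => (a : Fin n ⊕ Fin n → F) (Sum.inr (β k)) * (b : Fin n ⊕ Fin n → F) (Sum.inl (β k)))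
      (fun j => (a : Fin n ⊕ Fin n → F) (Sum.inr j) * (b : Fin n ⊕ Fin n → F) (Sum.inl j))
      (fun k => rfl)
    rw [← e1, ← e2] at h0
    linear_combination h0
  have hYsym : Y = Y.transpose := by
    ext t r
    have hp := hpair (u r) (u t)
    rw [Fintype.sum_sum_type, Fintype.sum_sum_type] at hp
    simp only [hu_ql, hu_pr, hu_pl, hu_qr, mul_zero, zero_mul, Finset.sum_const_zero,
      add_zero, Pi.single_apply, ite_mul, mul_ite, one_mul, mul_one, zero_mul, mul_zero,
      Finset.sum_ite_eq, Finset.sum_ite_eq', Finset.mem_univ, if_true] at hp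
    rw [Matrix.transpose_apply]
    linear_combination hp
  have hAw : ∀ s t, ((w s : ↥R) : Fin n ⊕ Fin n → F) (Sum.inr (β (Sum.inl t))) = -(A s t) := by
    intro s t
    have hp := hpair (u t) (w s)
    rw [Fintype.sum_sum_type, Fintype.sum_sum_type] at hp
    simp only [hu_ql, hu_pr, hu_pl, hu_qr, hwq, hw_pr, mul_zero, zero_mul,
      Finset.sum_const_zero, add_zero, zero_add, Pi.single_apply, ite_mul, mul_ite, one_mul,
      mul_one, Finset.sum_ite_eq, Finset.sum_ite_eq', Finset.mem_univ, if_true] at hp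
    linear_combination hp
  -- decomposition of an arbitrary preimage
  have hdecompR : ∀ z : (Fin np → F) × (Fin nq → F),
      g.symm z = ∑ r, z.1 r • u r + ∑ s, z.2 s • w s := by
    intro z
    apply g.injective
    rw [g.apply_symm_apply, map_add, map_sum, map_sum]
    simp only [_root_.map_smul]
    have hgu' : ∀ r, g (u r) = (Pi.single r 1, (0 : Fin nq → F)) :=
      fun r => g.apply_symm_apply _
    have hgw' : ∀ s, g (w s) = ((0 : Fin np → F), Pi.single s 1) :=
      fun s => g.apply_symm_apply _
    simp only [hgu', hgw', Prod.smul_mk, smul_zero]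
    refine Prod.ext ?_ ?_ |>.symm
    · simp only [Prod.fst_add, Prod.fst_sum, Prod.snd_sum]
      funext j
      simp [Pi.single_apply, Finset.sum_ite_eq, Finset.sum_ite_eq']
    · simp only [Prod.snd_add, Prod.fst_sum, Prod.snd_sum]
      funext j
      simp [Pi.single_apply, Finset.sum_ite_eq, Finset.sum_ite_eq']
  have hdecomp : ∀ z : (Fin np → F) × (Fin nq → F),
      ((g.symm z : ↥R) : Fin n ⊕ Fin n → F)
        = ∑ r, z.1 r • ((u r : ↥R) : Fin n ⊕ Fin n → F)
          + ∑ s, z.2 s • ((w s : ↥R) : Fin n ⊕ Fin n → F) := by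
    intro z
    rw [hdecompR z]
    push_cast
    simp
  -- the membership characterisation
  have hmem : ∀ v : Fin n ⊕ Fin n → F, v ∈ R ↔
      ((∀ s, v (Sum.inl (β (Sum.inr s))) = A.mulVec (fun r => v (Sum.inl (β (Sum.inl r)))) s) ∧
       (∀ t, v (Sum.inr (β (Sum.inl t))) =
          - Y.mulVec (fun r => v (Sum.inl (β (Sum.inl r)))) t
          - A.transpose.mulVec (fun s => v (Sum.inr (β (Sum.inr s)))) t)) := by
    intro v
    constructor
    · intro hv
      have hval : v = ((g.symm (π ⟨v, hv⟩) : ↥R) : Fin n ⊕ Fin n → F) := by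
        rw [show π ⟨v, hv⟩ = g ⟨v, hv⟩ from rfl, g.symm_apply_apply]
      rw [hdecomp] at hval
      replace hval : v = ∑ r, v (Sum.inl (β (Sum.inl r))) • ((u r : ↥R) : Fin n ⊕ Fin n → F)
          + ∑ s, v (Sum.inr (β (Sum.inr s))) • ((w s : ↥R) : Fin n ⊕ Fin n → F) := hval
      constructor
      · intro s
        have := congrFun hval (Sum.inl (β (Sum.inr s)))
        rw [this]
        simp only [Finset.sum_apply, Pi.add_apply, Pi.smul_apply, smul_eq_mul,
          hu_qr, hwq, mul_zero, Finset.sum_const_zero, add_zero]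
        rw [Matrix.mulVec, dotProduct]
        exact Finset.sum_congr rfl fun r _ => mul_comm _ _
      · intro t
        have := congrFun hval (Sum.inr (β (Sum.inl t)))
        rw [this]
        simp only [Finset.sum_apply, Pi.add_apply, Pi.smul_apply, smul_eq_mul,
          hu_pl, hAw]
        rw [Matrix.mulVec, dotProduct, Matrix.mulVec, dotProduct]
        rw [sub_eq_add_neg, ← Finset.sum_neg_distrib, ← Finset.sum_neg_distrib]
        congr 1
        · exact Finset.sum_congr rfl fun r _ => by ring
        · exact Finset.sum_congr rfl fun s _ => by
            rw [Matrix.transpose_apply]; ring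
    · rintro ⟨e1, e2⟩
      set x : Fin np → F := fun r => v (Sum.inl (β (Sum.inl r))) with hx
      set y : Fin nq → F := fun s => v (Sum.inr (β (Sum.inr s))) with hy
      have key : v = ((g.symm (x, y) : ↥R) : Fin n ⊕ Fin n → F) := by
        have hd := hdecomp (x, y)
        funext k
        rw [hd]
        obtain ⟨m, rfl⟩ : ∃ m, Sum.map β β m = k :=
          ⟨Sum.map β.symm β.symm k, by cases k <;> simp⟩
        cases m with
        | inl j =>
          simp only [Sum.map_inl]
          cases j with
          | inl r0 =>
            simp only [Finset.sum_apply, Pi.add_apply, Pi.smul_apply, smul_eq_mul,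
              hu_ql, hwq, mul_zero, Finset.sum_const_zero, add_zero, Pi.single_apply,
              mul_ite, mul_one, mul_zero, Finset.sum_ite_eq, Finset.sum_ite_eq',
              Finset.mem_univ, if_true]
            rfl
          | inr s0 =>
            rw [e1 s0]
            simp only [Finset.sum_apply, Pi.add_apply, Pi.smul_apply, smul_eq_mul,
              hu_qr, hwq, mul_zero, Finset.sum_const_zero, add_zero]
            rw [Matrix.mulVec, dotProduct]
            exact Finset.sum_congr rfl fun r _ => mul_comm _ _
        | inr j =>
          simp only [Sum.map_inr]
          cases j with
          | inl t =>
            rw [e2 t]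
            simp only [Finset.sum_apply, Pi.add_apply, Pi.smul_apply, smul_eq_mul,
              hu_pl, hAw]
            rw [Matrix.mulVec, dotProduct, Matrix.mulVec, dotProduct]
            rw [sub_eq_add_neg, ← Finset.sum_neg_distrib, ← Finset.sum_neg_distrib]
            congr 1
            · exact Finset.sum_congr rfl fun r _ => by ring
            · exact Finset.sum_congr rfl fun s _ => by
                rw [Matrix.transpose_apply]; ring
          | inr s0 =>
            simp only [Finset.sum_apply, Pi.add_apply, Pi.smul_apply, smul_eq_mul,
              hu_pr, hw_pr, mul_zero, Finset.sum_const_zero, zero_add, Pi.single_apply,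
              mul_ite, mul_one, mul_zero, Finset.sum_ite_eq, Finset.sum_ite_eq',
              Finset.mem_univ, if_true]
            rfl
      rw [key]
      exact (g.symm (x, y)).2
  exact ⟨np, nq, h, Y, A, β.trans (finSumFinEquiv.trans (finCongr h)).symm, hYsym,
    key_ker h R β Y A hmem⟩
end

section
/- Let R ⊆ F^{2n} be a Lagrangian subspace with a standard-form parity-check matrix determined by (Y, A, σ), i.e., H = [[Y,0,I,Aᵀ],[-A,I,0,0]]·σ_S with Y = Yᵀ. Then R is a Kirchhoff relation (contains the translation vector ε = (1⃗,0)) if and only if Aᵀ·1⃗ = 1⃗ (A is quasi-stochastic in the appropriate sense) and Y·1⃗ = 0. -/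
open Matrix

/-- A Lagrangian subspace with standard-form parity-check matrix
`H = [[Y,0,I,Aᵀ],[-A,I,0,0]]·σ_S` (with `Y = Yᵀ`) is Kirchhoff (contains the
translation vector `ε = (1⃗,0)`) iff `1⃗ᵀ·Aᵀ = 1⃗` (i.e. `A` is quasi-stochastic)
and `Y·1⃗ = 0`. -/
theorem stmt_9 (F : Type*) [Field F] (np nq : ℕ)
    (Y : Matrix (Fin np) (Fin np) F) (A : Matrix (Fin nq) (Fin np) F)
    (σ : Equiv.Perm (Fin np ⊕ Fin nq)) (hY : Y = Y.transpose) :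
    let σS : Matrix ((Fin np ⊕ Fin nq) ⊕ (Fin np ⊕ Fin nq))
        ((Fin np ⊕ Fin nq) ⊕ (Fin np ⊕ Fin nq)) F :=
      (Equiv.sumCongr σ σ).toPEquiv.toMatrix
    let H : Matrix (Fin np ⊕ Fin nq) ((Fin np ⊕ Fin nq) ⊕ (Fin np ⊕ Fin nq)) F :=
      Matrix.fromBlocks (Matrix.fromCols Y 0) (Matrix.fromCols 1 A.transpose)
        (Matrix.fromCols (-A) 1) 0 * σS
    ((Sum.elim (fun _ => (1 : F)) (fun _ => (0 : F)))
        ∈ LinearMap.ker H.mulVecLin)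
      ↔ (Matrix.vecMul (fun _ => (1 : F)) A.transpose = fun _ => (1 : F)) ∧
        Y.mulVec (fun _ => (1 : F)) = 0 := by
  intro σS H
  have hε : (Sum.elim (fun _ => (1 : F)) (fun _ => (0 : F))
      : ((Fin np ⊕ Fin nq) ⊕ (Fin np ⊕ Fin nq)) → F)
      ∘ ⇑(Equiv.sumCongr σ σ) = Sum.elim (fun _ => 1) (fun _ => 0) := by
    funext x; cases x <;> simp
  have hH : H = (Matrix.fromBlocks (Matrix.fromCols Y 0)
      (Matrix.fromCols 1 A.transpose) (Matrix.fromCols (-A) 1) 0).submatrix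
      id (Equiv.sumCongr σ σ).symm := PEquiv.mul_toMatrix_toPEquiv _ _
  rw [LinearMap.mem_ker, mulVecLin_apply, hH, submatrix_mulVec_equiv]
  simp only [Equiv.symm_symm, Function.comp_id]
  rw [hε]
  have h1 : ((Sum.elim (fun _ => (1:F)) (fun _ => (0:F)) :
        ((Fin np ⊕ Fin nq) ⊕ (Fin np ⊕ Fin nq)) → F)) ∘ Sum.inl
      = Sum.elim (fun _ => 1) (fun _ => 1) := by funext x; cases x <;> simp
  have h2 : ((Sum.elim (fun _ => (1:F)) (fun _ => (0:F)) :
        ((Fin np ⊕ Fin nq) ⊕ (Fin np ⊕ Fin nq)) → F)) ∘ Sum.inr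
      = Sum.elim (fun _ => 0) (fun _ => 0) := by funext x; cases x <;> simp
  rw [fromBlocks_mulVec, h1, h2]
  have hv : Matrix.vecMul (fun _ => (1 : F)) A.transpose = A.mulVec (fun _ => 1) := by
    rw [vecMul_transpose]
  rw [hv]
  have hz1 : (fun _ : Fin nq => (0:F)) = (0 : Fin nq → F) := rfl
  have hz2 : (fun _ : Fin np => (0:F)) = (0 : Fin np → F) := rfl
  rw [hz1, hz2]
  simp only [fromCols_mulVec_sumElim, Matrix.zero_mulVec, Matrix.mulVec_zero,
    add_zero, zero_add, Matrix.one_mulVec, Matrix.neg_mulVec]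
  constructor
  · intro h
    constructor
    · funext j
      have := congrFun h (Sum.inr j)
      simp only [Sum.elim_inr, Pi.add_apply, Pi.neg_apply, Pi.zero_apply] at this
      linear_combination (-1 : F) * this
    · funext i
      have := congrFun h (Sum.inl i)
      simpa using this
  · rintro ⟨h1, h2⟩
    funext x
    cases x with
    | inl i => simpa using congrFun h2 i
    | inr j =>
      have := congrFun h1 j
      simp only [Sum.elim_inr, Pi.add_apply, Pi.neg_apply, Pi.zero_apply]
      linear_combination -this
end

section
/- Let R ⊆ F^{2n} be a Lagrangian state with standard-form parity-check matrix H = [[Y,0,I,Aᵀ],[-A,I,0,0]] (Y = Yᵀ). For every element ((q₀,q₁),(p₀,p₁)) ∈ R, the power input q₀ᵀp₀ + q₁ᵀp₁ equals -q₀ᵀYq₀. Consequently (if char F ≠ 2), R is lossless (power input identically zero) if and only if Y = 0. -/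
open Matrix

section aux

variable {F : Type*} [Field F] {np nq : ℕ}

lemma stmt13_key (Y : Matrix (Fin np) (Fin np) F) (A : Matrix (Fin nq) (Fin np) F)
    (v : ((Fin np ⊕ Fin nq) ⊕ (Fin np ⊕ Fin nq)) → F)
    (hv : (Matrix.fromBlocks (Matrix.fromCols Y 0) (Matrix.fromCols 1 A.transpose)
        (Matrix.fromCols (-A) 1) 0) *ᵥ v = 0) :
    (∑ i : Fin np ⊕ Fin nq, v (Sum.inl i) * v (Sum.inr i))
      = -((fun i => v (Sum.inl (Sum.inl i))) ⬝ᵥ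
          Y.mulVec (fun i => v (Sum.inl (Sum.inl i)))) := by
  set q0 : Fin np → F := fun i => v (Sum.inl (Sum.inl i)) with hq0
  set q1 : Fin nq → F := fun i => v (Sum.inl (Sum.inr i)) with hq1
  set p0 : Fin np → F := fun i => v (Sum.inr (Sum.inl i)) with hp0
  set p1 : Fin nq → F := fun i => v (Sum.inr (Sum.inr i)) with hp1
  have hv' : v = Sum.elim (Sum.elim q0 q1) (Sum.elim p0 p1) := by
    funext x; rcases x with (i|i) <;> rcases i with i|i <;> rfl
  rw [hv', Matrix.fromBlocks_mulVec] at hv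
  have e1 : ∀ i, (Y *ᵥ q0) i + (p0 i + (A.transpose *ᵥ p1) i) = 0 := by
    intro i
    simpa [Matrix.fromCols_mulVec_sumElim] using congrFun hv (Sum.inl i)
  have e2 : ∀ i, ((-A) *ᵥ q0) i + q1 i = 0 := by
    intro i
    simpa [Matrix.fromCols_mulVec_sumElim] using congrFun hv (Sum.inr i)
  have hp0eq : p0 = -(Y *ᵥ q0) - A.transpose *ᵥ p1 := by
    funext i
    simp only [Pi.sub_apply, Pi.neg_apply]
    linear_combination e1 i
  have hq1eq : q1 = A *ᵥ q0 := by
    funext i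
    have := e2 i
    rw [Matrix.neg_mulVec] at this
    simp only [Pi.neg_apply] at this
    linear_combination this
  have hsum : (∑ i : Fin np ⊕ Fin nq, v (Sum.inl i) * v (Sum.inr i))
      = q0 ⬝ᵥ p0 + q1 ⬝ᵥ p1 := by
    rw [Fintype.sum_sum_type]; rfl
  rw [hsum, hp0eq, hq1eq]
  have : q0 ⬝ᵥ (A.transpose *ᵥ p1) = (A *ᵥ q0) ⬝ᵥ p1 := by
    rw [Matrix.dotProduct_mulVec, Matrix.vecMul_transpose]
  simp [dotProduct_sub, dotProduct_neg, this]

end aux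

/-- For a Lagrangian state with standard-form parity-check matrix
`H = [[Y,0,I,Aᵀ],[-A,I,0,0]]` (`Y = Yᵀ`), the power input of every element
`(q,p)` of the kernel is `Σ q_i p_i = -q₀ᵀYq₀`; consequently (char F ≠ 2) the
state is lossless iff `Y = 0`. -/
theorem stmt_13 (F : Type*) [Field F] (hchar : ringChar F ≠ 2) (np nq : ℕ)
    (Y : Matrix (Fin np) (Fin np) F) (A : Matrix (Fin nq) (Fin np) F)
    (hY : Y = Y.transpose) :
    let H : Matrix (Fin np ⊕ Fin nq) ((Fin np ⊕ Fin nq) ⊕ (Fin np ⊕ Fin nq)) F :=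
      Matrix.fromBlocks (Matrix.fromCols Y 0) (Matrix.fromCols 1 A.transpose)
        (Matrix.fromCols (-A) 1) 0
    let R := LinearMap.ker H.mulVecLin
    (∀ v ∈ R, (∑ i : Fin np ⊕ Fin nq, v (Sum.inl i) * v (Sum.inr i))
        = -((fun i => v (Sum.inl (Sum.inl i))) ⬝ᵥ
            Y.mulVec (fun i => v (Sum.inl (Sum.inl i))))) ∧
    ((∀ v ∈ R, (∑ i : Fin np ⊕ Fin nq, v (Sum.inl i) * v (Sum.inr i)) = 0)
        ↔ Y = 0) := by
  intro H R
  have key : ∀ v ∈ R, (∑ i : Fin np ⊕ Fin nq, v (Sum.inl i) * v (Sum.inr i))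
      = -((fun i => v (Sum.inl (Sum.inl i))) ⬝ᵥ
          Y.mulVec (fun i => v (Sum.inl (Sum.inl i)))) := by
    intro v hv
    exact stmt13_key Y A v (by simpa [R, H, LinearMap.mem_ker, Matrix.mulVecLin_apply] using hv)
  refine ⟨key, ?_, ?_⟩
  · intro hzero
    have hq : ∀ q0 : Fin np → F, q0 ⬝ᵥ (Y *ᵥ q0) = 0 := by
      intro q0
      set v : ((Fin np ⊕ Fin nq) ⊕ (Fin np ⊕ Fin nq)) → F :=
        Sum.elim (Sum.elim q0 (A *ᵥ q0)) (Sum.elim (-(Y *ᵥ q0)) 0) with hvdef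
      have hmem : v ∈ R := by
        rw [LinearMap.mem_ker, Matrix.mulVecLin_apply]
        show Matrix.fromBlocks (Matrix.fromCols Y 0) (Matrix.fromCols 1 A.transpose)
          (Matrix.fromCols (-A) 1) 0 *ᵥ v = 0
        rw [hvdef, Matrix.fromBlocks_mulVec]
        simp [Matrix.fromCols_mulVec_sumElim, Matrix.neg_mulVec]
      have h1 := hzero v hmem
      have h2 := key v hmem
      rw [h1] at h2
      have : (fun i => v (Sum.inl (Sum.inl i))) = q0 := rfl
      rw [this] at h2
      exact (neg_eq_zero.mp h2.symm)
    have h2 : (2 : F) ≠ 0 := Ring.two_ne_zero hchar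
    ext i j
    have hii := hq (Pi.single i 1)
    have hjj := hq (Pi.single j 1)
    have hij := hq (Pi.single i 1 + Pi.single j 1)
    have hsingle : ∀ a b : Fin np, Pi.single a (1:F) ⬝ᵥ (Y *ᵥ Pi.single b 1) = Y a b := by
      intro a b
      simp [single_dotProduct, Matrix.mulVec_single]
    rw [add_dotProduct, Matrix.mulVec_add, dotProduct_add,
      dotProduct_add, hsingle, hsingle, hsingle, hsingle] at hij
    rw [hsingle] at hii hjj
    have hsym : Y j i = Y i j := by conv_lhs => rw [hY, Matrix.transpose_apply]
    have : 2 * Y i j = 0 := by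
      rw [hsym] at hij
      linear_combination hij - hii - hjj
    simpa [Matrix.zero_apply] using (mul_eq_zero.mp this).resolve_left h2
  · intro hY0 v hv
    rw [key v hv, hY0]
    simp
end

section
/- A graph state in KirRel is uniquely determined by a symmetric matrix Y with Y·1⃗ = 0: every Kirchhoff Lagrangian state R ⊆ F^{2k} admitting a parity-check matrix of the form (Y' | I_k)·σ_S can be written with a parity-check matrix (Ỹ | I_k) with no permutation, where Ỹ = σᵀY'σ is symmetric and satisfies Ỹ·1⃗ = 0; moreover R determines Ỹ uniquely (as a function p = -Ỹq). -/
open Matrix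

/-- A graph state (a Kirchhoff Lagrangian state of `F^{2k}` with
parity-check matrix `(Y' | I)·σ_S`, `Y'` symmetric) can be written with a
parity-check matrix `(Ỹ | I)` with no permutation, where `Ỹ = σᵀY'σ` is
symmetric and `Ỹ·1⃗ = 0`; moreover `Ỹ` is uniquely determined by the state. -/
theorem stmt_15 (F : Type*) [Field F] (k : ℕ)
    (Y' : Matrix (Fin k) (Fin k) F) (hY' : Y' = Y'.transpose)
    (σ : Equiv.Perm (Fin k)) :
    let σS : Matrix (Fin k ⊕ Fin k) (Fin k ⊕ Fin k) F :=
      (Equiv.sumCongr σ σ).toPEquiv.toMatrix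
    let R := LinearMap.ker (Matrix.fromCols Y' 1 * σS).mulVecLin
    (Sum.elim (fun _ => (1 : F)) (fun _ => (0 : F)) ∈ R) →
    ∃ Ytil : Matrix (Fin k) (Fin k) F,
      Ytil = (σ.toPEquiv.toMatrix : Matrix (Fin k) (Fin k) F).transpose * Y' *
        (σ.toPEquiv.toMatrix : Matrix (Fin k) (Fin k) F) ∧
      Ytil = Ytil.transpose ∧ Ytil.mulVec 1 = 0 ∧
      R = LinearMap.ker (Matrix.fromCols Ytil 1).mulVecLin ∧
      ∀ Z : Matrix (Fin k) (Fin k) F,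
        R = LinearMap.ker (Matrix.fromCols Z 1).mulVecLin → Z = Ytil := by
  intro σS R h1
  set P : Matrix (Fin k) (Fin k) F := σ.toPEquiv.toMatrix with hP
  have hPt : Pᵀ = (σ.symm.toPEquiv.toMatrix : Matrix (Fin k) (Fin k) F) := by
    rw [Equiv.toPEquiv_symm, PEquiv.toMatrix_symm]
  have hPtP : Pᵀ * P = 1 := by
    rw [hPt, hP, ← PEquiv.toMatrix_trans, ← Equiv.toPEquiv_trans]
    simp
  have hPPt : P * Pᵀ = 1 := by
    rw [hPt, hP, ← PEquiv.toMatrix_trans, ← Equiv.toPEquiv_trans]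
    simp
  have hσS : σS = Matrix.fromBlocks P 0 0 P := by
    ext (i | i) (j | j) <;>
      simp [σS, hP, PEquiv.toMatrix_apply, Equiv.toPEquiv_apply, Matrix.one_apply]
  have hM : Matrix.fromCols Y' (1 : Matrix (Fin k) (Fin k) F) * σS = Matrix.fromCols (Y' * P) P := by
    rw [hσS, Matrix.fromCols_mul_fromBlocks]
    simp
  set Ytil : Matrix (Fin k) (Fin k) F := Pᵀ * Y' * P with hYtil
  have hfc : Matrix.fromCols Ytil 1 = Pᵀ * (Matrix.fromCols Y' (1 : Matrix (Fin k) (Fin k) F) * σS) := by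
    rw [hM, Matrix.mul_fromCols, hPtP, hYtil, Matrix.mul_assoc]
  -- the all-ones vector is fixed by P
  have hP1 : P *ᵥ (1 : Fin k → F) = 1 := by
    funext i
    simp [Matrix.mulVec, dotProduct, hP, PEquiv.toMatrix_apply, Equiv.toPEquiv_apply,
      Pi.one_apply, Finset.sum_ite_eq]
  -- from h1 : Y' *ᵥ 1 = 0
  have hY1 : Y' *ᵥ (1 : Fin k → F) = 0 := by
    have h1' : (Matrix.fromCols Y' (1 : Matrix (Fin k) (Fin k) F) * σS) *ᵥ
        (Sum.elim (fun _ => (1 : F)) fun _ => (0 : F)) = 0 := h1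
    rw [hM, Matrix.fromCols_mulVec_sumElim] at h1'
    have e0 : (fun _ : Fin k => (0 : F)) = 0 := rfl
    have e1 : (fun _ : Fin k => (1 : F)) = 1 := rfl
    rw [e0, e1, Matrix.mulVec_zero, add_zero, ← Matrix.mulVec_mulVec, hP1] at h1'
    exact h1'
  -- kernel equality
  have hR : R = LinearMap.ker
      (Matrix.fromCols Y' (1 : Matrix (Fin k) (Fin k) F) * σS).mulVecLin := rfl
  have hRker : R = LinearMap.ker (Matrix.fromCols Ytil 1).mulVecLin := by
    ext x
    simp only [hR, LinearMap.mem_ker, Matrix.mulVecLin_apply, hfc]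
    constructor
    · intro h
      rw [← Matrix.mulVec_mulVec, h, Matrix.mulVec_zero]
    · intro h
      have h2 : P *ᵥ ((Pᵀ * (Matrix.fromCols Y' (1 : Matrix (Fin k) (Fin k) F) * σS)) *ᵥ x) = 0 := by
        rw [h, Matrix.mulVec_zero]
      rwa [Matrix.mulVec_mulVec, ← Matrix.mul_assoc, hPPt, Matrix.one_mul] at h2
  refine ⟨Ytil, rfl, ?_, ?_, hRker, ?_⟩
  · rw [hYtil, Matrix.transpose_mul, Matrix.transpose_mul, Matrix.transpose_transpose,
      ← hY', Matrix.mul_assoc]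
  · have : Ytil *ᵥ (1 : Fin k → F) = Pᵀ *ᵥ (Y' *ᵥ (P *ᵥ (1 : Fin k → F))) := by
      rw [Matrix.mulVec_mulVec, Matrix.mulVec_mulVec, hYtil]
    rw [this, hP1, hY1, Matrix.mulVec_zero]
  · intro Z hZ
    have hkk : LinearMap.ker (Matrix.fromCols Z (1 : Matrix (Fin k) (Fin k) F)).mulVecLin =
        LinearMap.ker (Matrix.fromCols Ytil (1 : Matrix (Fin k) (Fin k) F)).mulVecLin := by
      exact hZ.symm.trans hRker
    have key : ∀ q : Fin k → F, Ytil *ᵥ q = Z *ᵥ q := by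
      intro q
      have hmem : Sum.elim q (-(Z *ᵥ q)) ∈
          LinearMap.ker (Matrix.fromCols Z (1 : Matrix (Fin k) (Fin k) F)).mulVecLin := by
        simp [LinearMap.mem_ker, Matrix.mulVecLin_apply, Matrix.fromCols_mulVec_sumElim]
      rw [hkk] at hmem
      have : Ytil *ᵥ q + (1 : Matrix (Fin k) (Fin k) F) *ᵥ (-(Z *ᵥ q)) = 0 := by
        simpa [LinearMap.mem_ker, Matrix.mulVecLin_apply,
          Matrix.fromCols_mulVec_sumElim] using hmem
      rw [Matrix.one_mulVec] at this
      exact add_neg_eq_zero.mp this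
    ext i j
    have := congrFun (key (Pi.single j 1)) i
    simpa [Matrix.mulVec_single] using this.symm
end

section
/- Let W = {(V',I') ∈ F^n⊕F^n | YV' = -I'} be a graph state with Y symmetric and Y·1⃗ = 0, and let M = [I_{n}; A]ᵀ-style stacked matrix M = (I over A) for a quasi-stochastic matrix A (A·1⃗ = 1⃗). Then the relational composite of L(M) = {((V',I'),(V,I)) | V = MV', I' = MᵀI} with W is the Lagrangian state {((V₁,V₂),(I₁,I₂)) | V₂ = AV₁ and YV₁ = -(I₁ + AᵀI₂)}, whose parity-check matrix is the standard Kirchhoff form [[Y,0,I,Aᵀ],[-A,I,0,0]]. -/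
open Matrix

/-- Composing `L(M)` (with `M = (I ; A)` stacked, `A`
quasi-stochastic) with the graph state `W = {(V',I') | YV' = -I'}` (`Y`
symmetric, `Y·1⃗ = 0`) yields exactly the Lagrangian state
`{((V₁,V₂),(I₁,I₂)) | V₂ = AV₁ ∧ YV₁ = -(I₁ + AᵀI₂)}`, whose parity-check
matrix is the standard Kirchhoff form `[[Y,0,I,Aᵀ],[-A,I,0,0]]`. -/
theorem stmt_18 (F : Type*) [Field F] (n m : ℕ)
    (Y : Matrix (Fin n) (Fin n) F) (hY : Y = Y.transpose) (hY1 : Y.mulVec 1 = 0)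
    (A : Matrix (Fin m) (Fin n) F) (hA : A.mulVec 1 = 1) :
    let M : Matrix (Fin n ⊕ Fin m) (Fin n) F :=
      Matrix.fromRows (1 : Matrix (Fin n) (Fin n) F) A
    let W : Set ((Fin n → F) × (Fin n → F)) := {vi | Y.mulVec vi.1 = -vi.2}
    let LM : Set (((Fin n → F) × (Fin n → F)) ×
        ((Fin n ⊕ Fin m → F) × (Fin n ⊕ Fin m → F))) :=
      {x | x.2.1 = M.mulVec x.1.1 ∧ x.1.2 = M.transpose.mulVec x.2.2}
    let comp : Set ((Fin n ⊕ Fin m → F) × (Fin n ⊕ Fin m → F)) :=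
      {VI | ∃ vi ∈ W, (vi, VI) ∈ LM}
    let H : Matrix (Fin n ⊕ Fin m) ((Fin n ⊕ Fin m) ⊕ (Fin n ⊕ Fin m)) F :=
      Matrix.fromBlocks (Matrix.fromCols Y 0) (Matrix.fromCols 1 A.transpose)
        (Matrix.fromCols (-A) 1) 0
    comp = {VI | (fun j => VI.1 (Sum.inr j)) = A.mulVec (fun i => VI.1 (Sum.inl i)) ∧
        Y.mulVec (fun i => VI.1 (Sum.inl i))
          = -((fun i => VI.2 (Sum.inl i)) +
              A.transpose.mulVec (fun j => VI.2 (Sum.inr j)))} ∧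
    comp = {VI | H.mulVec (Sum.elim VI.1 VI.2) = 0} := by
  intro M W LM comp H
  have hMT : M.transpose = fromCols (1 : Matrix (Fin n) (Fin n) F) A.transpose := by
    simp [M, transpose_fromRows]
  have key : ∀ VI : (Fin n ⊕ Fin m → F) × (Fin n ⊕ Fin m → F),
      VI ∈ comp ↔ ((fun j => VI.1 (Sum.inr j)) = A.mulVec (fun i => VI.1 (Sum.inl i)) ∧
        Y.mulVec (fun i => VI.1 (Sum.inl i))
          = -((fun i => VI.2 (Sum.inl i)) +
              A.transpose.mulVec (fun j => VI.2 (Sum.inr j)))) := by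
    intro VI
    have hsplit : VI.2 = Sum.elim (fun i => VI.2 (Sum.inl i)) (fun j => VI.2 (Sum.inr j)) := by
      funext x; cases x <;> rfl
    constructor
    · rintro ⟨vi, hW, h1, h2⟩
      have hM : VI.1 = Sum.elim ((1 : Matrix (Fin n) (Fin n) F).mulVec vi.1) (A.mulVec vi.1) := by
        rw [h1]; exact fromRows_mulVec _ _ _
      have hv : (fun i => VI.1 (Sum.inl i)) = vi.1 := by
        funext i; rw [hM]; simp [one_mulVec]
      have hw : (fun j => VI.1 (Sum.inr j)) = A.mulVec vi.1 := by
        funext j; rw [hM]; simp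
      have hI : vi.2 = (fun i => VI.2 (Sum.inl i))
          + A.transpose.mulVec (fun j => VI.2 (Sum.inr j)) := by
        rw [h2, hMT]
        conv_lhs => rw [hsplit]
        rw [fromCols_mulVec_sumElim, one_mulVec]
      refine ⟨by rw [hw, hv], ?_⟩
      rw [hv, hW, hI]
    · rintro ⟨h1, h2⟩
      refine ⟨⟨fun i => VI.1 (Sum.inl i),
        (fun i => VI.2 (Sum.inl i)) + A.transpose.mulVec (fun j => VI.2 (Sum.inr j))⟩,
        h2, ?_, ?_⟩
      · funext x
        cases x with
        | inl i => simp [M, fromRows_mulVec, one_mulVec]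
        | inr j =>
          rw [show VI.1 (Sum.inr j) = A.mulVec (fun i => VI.1 (Sum.inl i)) j from congrFun h1 j]
          simp [M, fromRows_mulVec]
      · show _ = M.transpose.mulVec VI.2
        rw [hMT]
        conv_rhs => rw [hsplit]
        rw [fromCols_mulVec_sumElim, one_mulVec]
  refine ⟨Set.ext key, ?_⟩
  ext VI
  rw [key VI]
  show _ ↔ H.mulVec (Sum.elim VI.1 VI.2) = 0
  have hsplit1 : VI.1 = Sum.elim (fun i => VI.1 (Sum.inl i)) (fun j => VI.1 (Sum.inr j)) := by
    funext x; cases x <;> rfl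
  have hsplit2 : VI.2 = Sum.elim (fun i => VI.2 (Sum.inl i)) (fun j => VI.2 (Sum.inr j)) := by
    funext x; cases x <;> rfl
  have hH : H.mulVec (Sum.elim VI.1 VI.2) =
      Sum.elim (Y.mulVec (fun i => VI.1 (Sum.inl i)) +
          ((fun i => VI.2 (Sum.inl i)) + A.transpose.mulVec (fun j => VI.2 (Sum.inr j))))
        (-(A.mulVec (fun i => VI.1 (Sum.inl i))) + (fun j => VI.1 (Sum.inr j))) := by
    conv_lhs => rw [hsplit1, hsplit2]
    simp [H, fromBlocks_mulVec, Sum.elim_comp_inl, Sum.elim_comp_inr,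
      fromCols_mulVec_sumElim, one_mulVec, zero_mulVec, neg_mulVec]
  have helim : ∀ (f : Fin n → F) (g : Fin m → F), Sum.elim f g = 0 ↔ f = 0 ∧ g = 0 := by
    intro f g
    constructor
    · intro h
      exact ⟨funext fun i => congrFun h (Sum.inl i), funext fun j => congrFun h (Sum.inr j)⟩
    · rintro ⟨rfl, rfl⟩
      funext x; cases x <;> rfl
  rw [hH, helim, add_eq_zero_iff_eq_neg, neg_add_eq_zero]
  exact ⟨fun ⟨a, b⟩ => ⟨b, a.symm⟩, fun ⟨a, b⟩ => ⟨b.symm, a⟩⟩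
end

section
/- Deterministic quasi-stochastic structure is preserved under row reduction: let B = (-A | I_{k}) be a k×(k+m) matrix over F where A is deterministic quasi-stochastic (each row of A has exactly one nonzero entry, equal to 1), so each row of B has exactly one entry 1 and one entry -1 and zeros elsewhere. If B' is obtained from B·σ (σ a permutation of columns) by Gaussian row-reduction to reduced form with full rank k, and no two rows of B become linearly dependent, then every row of B' again has exactly one entry equal to 1 and one entry equal to -1 (up to overall sign), zeros elsewhere. -/
open Matrix

/-- Deterministic structure is preserved under row reduction.
Let `B = (-A | I_k)` with `A` deterministic (each row of `A` has exactly one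
nonzero entry, equal to `1`), so each row of `B` has exactly one `1` and one
`-1`.  If `B'` has the same row space as `B·σ` (a column permutation of `B`),
has full rank `k` ("no two rows become linearly dependent"), and is in reduced
standard form `(-A' | I_k)` up to a column permutation `τ`, then every row of
`B'` again has exactly one entry `c` and one entry `-c` with `c = ±1`, and
zeros elsewhere. -/
theorem stmt_19 (F : Type*) [Field F] (k m : ℕ)
    (A : Matrix (Fin k) (Fin m) F)
    (hA : ∀ i, ∃ j, A i j = 1 ∧ ∀ j', j' ≠ j → A i j' = 0)
    (σ : Equiv.Perm (Fin m ⊕ Fin k))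
    (B' : Matrix (Fin k) (Fin m ⊕ Fin k) F)
    (hspan : LinearMap.range B'.transpose.mulVecLin
      = LinearMap.range
          (((Matrix.fromCols (-A) (1 : Matrix (Fin k) (Fin k) F)).submatrix
            id σ)).transpose.mulVecLin)
    (hrank : B'.rank = k)
    (hreduced : ∃ (τ : Equiv.Perm (Fin m ⊕ Fin k)) (A' : Matrix (Fin k) (Fin m) F),
      B'.submatrix id τ
        = Matrix.fromCols (-A') (1 : Matrix (Fin k) (Fin k) F)) :
    ∀ i, ∃ c : F, (c = 1 ∨ c = -1) ∧ ∃ j₁ j₂, j₁ ≠ j₂ ∧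
      B' i j₁ = c ∧ B' i j₂ = -c ∧ ∀ j, j ≠ j₁ → j ≠ j₂ → B' i j = 0 := by
  classical
  obtain ⟨τ, A', hτ⟩ := hreduced
  choose jj hj1 hj0 using hA
  set M : Matrix (Fin k) (Fin m ⊕ Fin k) F :=
    (Matrix.fromCols (-A) (1 : Matrix (Fin k) (Fin k) F)).submatrix id σ with hMdef
  set a : Fin k → Fin m ⊕ Fin k := fun r => σ.symm (Sum.inl (jj r)) with ha
  set b : Fin k → Fin m ⊕ Fin k := fun r => σ.symm (Sum.inr r) with hb
  have hab : ∀ r, a r ≠ b r := by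
    intro r h
    have := σ.symm.injective h
    simp at this
  have hMrow : ∀ r y, M r y = if y = b r then 1 else if y = a r then -1 else 0 := by
    intro r y
    rcases hy : σ y with j | s
    · have h1 : M r y = -A r j := by
        simp [hMdef, Matrix.submatrix_apply, hy]
      have hyb : y ≠ b r := by
        intro h; rw [h, hb] at hy; simp at hy
      rw [h1, if_neg hyb]
      by_cases hya : y = a r
      · rw [if_pos hya]
        have hj : j = jj r := by
          rw [hya, ha] at hy; simp at hy; exact hy.symm
        rw [hj, hj1 r]
      · rw [if_neg hya]
        have hj : j ≠ jj r := by
          intro h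
          apply hya
          have : y = σ.symm (Sum.inl j) := by
            rw [← hy]; simp
          rw [this, h, ha]
        rw [hj0 r j hj, neg_zero]
    · have h1 : M r y = if r = s then (1:F) else 0 := by
        simp [hMdef, Matrix.submatrix_apply, hy, Matrix.one_apply]
      have hya : y ≠ a r := by
        intro h; rw [h, ha] at hy; simp at hy
      by_cases hyb : y = b r
      · have hrs : r = s := by
          rw [hyb, hb] at hy; simp at hy; exact hy
        rw [if_pos hyb, h1, if_pos hrs]
      · have hrs : r ≠ s := by
          intro h
          apply hyb
          have : y = σ.symm (Sum.inr s) := by rw [← hy]; simp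
          rw [this, ← h, hb]
        rw [if_neg hyb, if_neg hya, h1, if_neg hrs]
  have happ : ∀ (N : Matrix (Fin k) (Fin m ⊕ Fin k) F) (c : Fin k → F) y,
      (N.transpose.mulVecLin c) y = ∑ r, N r y * c r := by
    intro N c y
    simp [Matrix.mulVecLin_apply, Matrix.mulVec, dotProduct,
      Matrix.transpose_apply, Matrix.vecMul, mul_comm]
  -- membership characterization of the row space of M
  have hmemM : ∀ x : (Fin m ⊕ Fin k) → F,
      x ∈ LinearMap.range M.transpose.mulVecLin ↔
        ∃ c : Fin k → F, ∀ y, x y = ∑ r, M r y * c r := by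
    intro x
    constructor
    · rintro ⟨c, rfl⟩
      exact ⟨c, fun y => (happ M c y).symm⟩
    · rintro ⟨c, hc⟩
      refine ⟨c, ?_⟩
      funext y
      rw [happ M c y, ← hc y]
  have hrowM : ∀ r, (fun y => M r y) ∈ LinearMap.range M.transpose.mulVecLin := by
    intro r
    refine (hmemM _).mpr ⟨Pi.single r 1, fun y => ?_⟩
    simp [Pi.single_apply, mul_ite, Finset.sum_ite_eq']
  set E : (Fin m ⊕ Fin k) → (Fin m ⊕ Fin k) → Prop :=
    fun x y => ∃ r, a r = x ∧ b r = y with hE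
  have hedge : ∀ r, Relation.EqvGen E (a r) (b r) :=
    fun r => Relation.EqvGen.rel _ _ ⟨r, rfl, rfl⟩
  -- path differences lie in the row space
  have hpath : ∀ x y, Relation.EqvGen E x y →
      (fun t => (if t = x then (1:F) else 0) - (if t = y then 1 else 0))
        ∈ LinearMap.range M.transpose.mulVecLin := by
    intro x y h
    induction h with
    | rel x y hxy =>
        obtain ⟨r, rfl, rfl⟩ := hxy
        have hr := hrowM r
        have hneg := neg_mem hr
        have heq : (fun t => (if t = a r then (1:F) else 0) - (if t = b r then 1 else 0))
            = -(fun y => M r y) := by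
          funext t
          by_cases h1 : t = b r
          · have h2 : t ≠ a r := by rw [h1]; exact fun h => hab r h.symm
            simp [hMrow, h1, h2, Ne.symm (hab r)]
          · by_cases h2 : t = a r
            · simp [hMrow, h2, h1, hab r]
            · simp [hMrow, h1, h2]
        rw [heq]; exact hneg
    | refl x =>
        have heq : (fun t => (if t = x then (1:F) else 0) - (if t = x then 1 else 0))
            = (0 : (Fin m ⊕ Fin k) → F) := by
          funext t; simp
        rw [heq]; exact zero_mem _
    | symm x y h ih =>
        have heq : (fun t => (if t = y then (1:F) else 0) - (if t = x then 1 else 0))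
            = -(fun t => (if t = x then (1:F) else 0) - (if t = y then 1 else 0)) := by
          funext t; simp only [Pi.neg_apply]; ring
        rw [heq]; exact neg_mem ih
    | trans x y z h1 h2 ih1 ih2 =>
        have heq : (fun t => (if t = x then (1:F) else 0) - (if t = z then 1 else 0))
            = (fun t => (if t = x then (1:F) else 0) - (if t = y then 1 else 0))
              + (fun t => (if t = y then (1:F) else 0) - (if t = z then 1 else 0)) := by
          funext t; simp only [Pi.add_apply]; ring
        rw [heq]; exact add_mem ih1 ih2
  -- class sums vanish on the row space
  have hsum : ∀ z (x : (Fin m ⊕ Fin k) → F),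
      x ∈ LinearMap.range M.transpose.mulVecLin →
        ∑ y, (if Relation.EqvGen E y z then x y else 0) = 0 := by
    intro z x hx
    obtain ⟨c, hc⟩ := (hmemM x).mp hx
    calc ∑ y, (if Relation.EqvGen E y z then x y else 0)
        = ∑ y, ∑ r, (if Relation.EqvGen E y z then M r y * c r else 0) := by
          apply Finset.sum_congr rfl
          intro y _
          by_cases hy : Relation.EqvGen E y z
          · rw [if_pos hy, hc y]
            apply Finset.sum_congr rfl
            intro r _; rw [if_pos hy]
          · rw [if_neg hy]
            symm; apply Finset.sum_eq_zero
            intro r _; rw [if_neg hy]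
      _ = ∑ r, ∑ y, (if Relation.EqvGen E y z then M r y * c r else 0) :=
          Finset.sum_comm
      _ = ∑ r, (∑ y, (if Relation.EqvGen E y z then M r y else 0)) * c r := by
          apply Finset.sum_congr rfl
          intro r _
          rw [Finset.sum_mul]
          apply Finset.sum_congr rfl
          intro y _
          rw [ite_mul, zero_mul]
      _ = 0 := by
          apply Finset.sum_eq_zero
          intro r _
          suffices h : (∑ y, (if Relation.EqvGen E y z then M r y else 0)) = 0 by
            rw [h, zero_mul]
          by_cases hr : Relation.EqvGen E (a r) z
          · have hbz : Relation.EqvGen E (b r) z :=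
              Relation.EqvGen.trans _ _ _ (Relation.EqvGen.symm _ _ (hedge r)) hr
            have heq : ∀ y, (if Relation.EqvGen E y z then M r y else 0)
                = (if y = b r then (1:F) else 0) + (if y = a r then (-1:F) else 0) := by
              intro y
              by_cases h1 : y = b r
              · have h2 : y ≠ a r := by rw [h1]; exact fun h => hab r h.symm
                simp [hMrow, h1, hbz, h2, Ne.symm (hab r)]
              · by_cases h2 : y = a r
                · simp [hMrow, h2, h1, hr, hab r]
                · simp [hMrow, h1, h2]
            rw [Finset.sum_congr rfl (fun y _ => heq y), Finset.sum_add_distrib]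
            simp [Finset.sum_ite_eq']
          · have hbz : ¬ Relation.EqvGen E (b r) z :=
              fun h => hr (Relation.EqvGen.trans _ _ _ (hedge r) h)
            apply Finset.sum_eq_zero
            intro y _
            split_ifs with h1
            · have hy1 : y ≠ b r := fun h => hbz (h ▸ h1)
              have hy2 : y ≠ a r := fun h => hr (h ▸ h1)
              rw [hMrow, if_neg hy1, if_neg hy2]
            · rfl
  -- restriction to a class stays in the row space
  have hrest : ∀ z (x : (Fin m ⊕ Fin k) → F),
      x ∈ LinearMap.range M.transpose.mulVecLin →
        (fun y => if Relation.EqvGen E y z then x y else 0)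
          ∈ LinearMap.range M.transpose.mulVecLin := by
    intro z x hx
    obtain ⟨c, hc⟩ := (hmemM x).mp hx
    refine (hmemM _).mpr ⟨fun r => if Relation.EqvGen E (a r) z then c r else 0, fun y => ?_⟩
    show (if Relation.EqvGen E y z then x y else 0)
        = ∑ r, M r y * (if Relation.EqvGen E (a r) z then c r else 0)
    by_cases hy : Relation.EqvGen E y z
    · rw [if_pos hy, hc y]
      apply Finset.sum_congr rfl
      intro r _
      by_cases hr : Relation.EqvGen E (a r) z
      · rw [if_pos hr]
      · have h1 : y ≠ a r := fun h => hr (h ▸ hy)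
        have h2 : y ≠ b r := fun h =>
          hr (Relation.EqvGen.trans _ _ _ (hedge r) (h ▸ hy))
        rw [if_neg hr, hMrow, if_neg h2, if_neg h1, zero_mul, zero_mul]
    · rw [if_neg hy]
      symm
      apply Finset.sum_eq_zero
      intro r _
      by_cases hr : Relation.EqvGen E (a r) z
      · have h1 : y ≠ a r := fun h => hy (h.symm ▸ hr)
        have h2 : y ≠ b r := by
          intro h
          have hbr : Relation.EqvGen E (b r) z :=
            Relation.EqvGen.trans _ _ _ (Relation.EqvGen.symm _ _ (hedge r)) hr
          exact hy (h.symm ▸ hbr)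
        rw [hMrow, if_neg h2, if_neg h1, zero_mul]
      · rw [if_neg hr, mul_zero]
  -- pivot structure of B'
  have hpiv : ∀ r s, B' r (τ (Sum.inr s)) = if r = s then (1:F) else 0 := by
    intro r s
    have h := congrFun (congrFun hτ r) (Sum.inr s)
    simpa [Matrix.submatrix_apply, Matrix.one_apply] using h
  -- injectivity: an element of the row space vanishing on all pivots is zero
  have hinj : ∀ x : (Fin m ⊕ Fin k) → F,
      x ∈ LinearMap.range M.transpose.mulVecLin →
        (∀ s, x (τ (Sum.inr s)) = 0) → x = 0 := by
    intro x hx h0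
    rw [← hspan] at hx
    obtain ⟨c, rfl⟩ := hx
    have hc : c = 0 := by
      funext s
      have h := h0 s
      have e : (B'.transpose.mulVecLin c) (τ (Sum.inr s)) = c s := by
        rw [happ B' c (τ (Sum.inr s))]
        simp [hpiv, ite_mul, Finset.sum_ite_eq]
      rw [e] at h
      simpa using h
    rw [hc, map_zero]
  -- rows of B' lie in the row space
  intro i
  have hwV : (fun y => B' i y) ∈ LinearMap.range M.transpose.mulVecLin := by
    rw [← hspan]
    refine ⟨Pi.single i 1, ?_⟩
    funext y
    rw [happ B' _ y]
    simp [Pi.single_apply, mul_ite, Finset.sum_ite_eq']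
  have hw_p : B' i (τ (Sum.inr i)) = 1 := by simp [hpiv]
  have hw_piv : ∀ s, s ≠ i → B' i (τ (Sum.inr s)) = 0 := by
    intro s hs
    rw [hpiv]
    exact if_neg (fun h => hs h.symm)
  have hsum_p := hsum (τ (Sum.inr i)) (fun y => B' i y) hwV
  -- existence of the second nonzero entry
  have hex : ∃ u, Relation.EqvGen E u (τ (Sum.inr i)) ∧ u ≠ τ (Sum.inr i) ∧ B' i u ≠ 0 := by
    by_contra hcon
    push_neg at hcon
    have heq : ∑ y, (if Relation.EqvGen E y (τ (Sum.inr i)) then B' i y else 0)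
        = ∑ y, (if y = τ (Sum.inr i) then (1:F) else 0) := by
      apply Finset.sum_congr rfl
      intro y _
      by_cases hy : y = τ (Sum.inr i)
      · subst hy
        rw [if_pos (Relation.EqvGen.refl _), if_pos rfl, hw_p]
      · rw [if_neg hy]
        split_ifs with h
        · exact hcon y h hy
        · rfl
    rw [heq] at hsum_p
    simp [Finset.sum_ite_eq'] at hsum_p
  obtain ⟨u, hup, hune, hwu⟩ := hex
  have hu_npiv : ∀ s, u ≠ τ (Sum.inr s) := by
    intro s h
    by_cases hs : s = i
    · exact hune (by rw [h, hs])
    · exact hwu (by rw [h]; exact hw_piv s hs)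
  have hp_ne_u : τ (Sum.inr i) ≠ u := fun h => hune h.symm
  -- all other entries vanish
  have hz : ∀ y, y ≠ τ (Sum.inr i) → y ≠ u → B' i y = 0 := by
    intro y hyp hyu
    by_cases hPy : ∃ s, y = τ (Sum.inr s)
    · obtain ⟨s, rfl⟩ := hPy
      apply hw_piv
      intro h
      exact hyp (by rw [h])
    · push_neg at hPy
      by_cases hyu' : Relation.EqvGen E y u
      · exfalso
        have hx := hpath y u hyu'
        have hx0 : (fun t => (if t = y then (1:F) else 0) - (if t = u then 1 else 0)) = 0 := by
          apply hinj _ hx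
          intro s
          have h1 : τ (Sum.inr s) ≠ y := fun h => hPy s h.symm
          have h2 : τ (Sum.inr s) ≠ u := fun h => hu_npiv s h.symm
          rw [if_neg h1, if_neg h2, sub_zero]
        have h := congrFun hx0 y
        simp [hyu] at h
      · have hyp' : ¬ Relation.EqvGen E y (τ (Sum.inr i)) := by
          intro h
          exact hyu' (Relation.EqvGen.trans _ _ _ h (Relation.EqvGen.symm _ _ hup))
        have hx := hrest y (fun t => B' i t) hwV
        have hx0 : (fun t => if Relation.EqvGen E t y then B' i t else 0) = 0 := by
          apply hinj _ hx
          intro s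
          by_cases hrel : Relation.EqvGen E (τ (Sum.inr s)) y
          · rw [if_pos hrel]
            apply hw_piv
            intro h
            apply hyp'
            apply Relation.EqvGen.symm
            rw [← h]
            exact hrel
          · rw [if_neg hrel]
        have h := congrFun hx0 y
        simpa [Relation.EqvGen.refl y] using h
  -- compute the value at u
  have hfin : (1 : F) + B' i u = 0 := by
    have heq : ∑ y, (if Relation.EqvGen E y (τ (Sum.inr i)) then B' i y else 0)
        = ∑ y, ((if y = τ (Sum.inr i) then (1:F) else 0) + (if y = u then B' i u else 0)) := by
      apply Finset.sum_congr rfl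
      intro y _
      by_cases h1 : y = τ (Sum.inr i)
      · subst h1
        rw [if_pos (Relation.EqvGen.refl _), hw_p, if_pos rfl,
          if_neg (fun h => hp_ne_u h), add_zero]
      · by_cases h2 : y = u
        · subst h2
          rw [if_pos hup, if_neg h1, if_pos rfl, zero_add]
        · rw [if_neg h1, if_neg h2, add_zero]
          split_ifs with h3
          · exact hz y h1 h2
          · rfl
    rw [heq, Finset.sum_add_distrib] at hsum_p
    simpa [Finset.sum_ite_eq'] using hsum_p
  refine ⟨1, Or.inl rfl, τ (Sum.inr i), u, hp_ne_u, hw_p, ?_, ?_⟩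
  · have : B' i u = -1 := by linear_combination hfin
    simpa using this
  · intro j hj1 hj2
    exact hz j hj1 hj2
end
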